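/- Let D be a bounded, open, connected subset of {(ρ,z) ∈ ℝ² : ρ > 0}, let g, h : D → ℝ be given functions, let (ρ₀,z₀) ∈ D, and let (ψ₁,γ₁) and (ψ₂,γ₂) be two pairs of functions, each continuous on the closure of D and twice continuously differentiable on D, satisfying on D the system: −2(ψ_ρρ + ψ_ρ/ρ + ψ_zz) + ψ_ρ² + ψ_z² + γ_ρρ + γ_zz = 0, ψ_ρ² − ψ_z² − γ_ρ/ρ = g, 2ψ_ρψ_z − γ_z/ρ = h, and ψ_ρ² + ψ_z² + γ_ρρ + γ_zz = 0. If ψ₁ = ψ₂ on the boundary ∂D and γ₁(ρ₀,z₀) = γ₂(ρ₀,z₀), then ψ₁ = ψ₂ and γ₁ = γ₂ on all of D. -/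

import Mathlib

/-- Partial derivative with respect to the first coordinate `ρ`. -/
noncomputable def dρ (f : ℝ × ℝ → ℝ) (p : ℝ × ℝ) : ℝ := fderiv ℝ f p (1, 0)

/-- Partial derivative with respect to the second coordinate `z`. -/
noncomputable def dz (f : ℝ × ℝ → ℝ) (p : ℝ × ℝ) : ℝ := fderiv ℝ f p (0, 1)

/-- The generalized Einstein vacuum system for the Weyl metric, with source
terms `g`, `h`, holding at the point `p`. -/
noncomputable def WeylSystem (ψ γ g h : ℝ × ℝ → ℝ) (p : ℝ × ℝ) : Prop :=
  -2 * (dρ (dρ ψ) p + dρ ψ p / p.1 + dz (dz ψ) p)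
      + (dρ ψ p) ^ 2 + (dz ψ p) ^ 2 + dρ (dρ γ) p + dz (dz γ) p = 0 ∧
  (dρ ψ p) ^ 2 - (dz ψ p) ^ 2 - dρ γ p / p.1 = g p ∧
  2 * dρ ψ p * dz ψ p - dz γ p / p.1 = h p ∧
  (dρ ψ p) ^ 2 + (dz ψ p) ^ 2 + dρ (dρ γ) p + dz (dz γ) p = 0

open Filter Metric Set

section Aux

variable {D : Set (ℝ × ℝ)} {f g : ℝ × ℝ → ℝ} {p : ℝ × ℝ}

lemma dρ_def (f : ℝ × ℝ → ℝ) : dρ f = fun q => fderiv ℝ f q ((1:ℝ),(0:ℝ)) := rfl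

lemma dz_def (f : ℝ × ℝ → ℝ) : dz f = fun q => fderiv ℝ f q ((0:ℝ),(1:ℝ)) := rfl

lemma diffAt_of_cd (hD : IsOpen D) (hf : ContDiffOn ℝ 2 f D) (hp : p ∈ D) :
    DifferentiableAt ℝ f p :=
  (hf.contDiffAt (hD.mem_nhds hp)).differentiableAt (by norm_num)

lemma cd_fd (hD : IsOpen D) (hf : ContDiffOn ℝ 2 f D) (v : ℝ × ℝ) :
    ContDiffOn ℝ 1 (fun q => fderiv ℝ f q v) D :=
  (hf.fderiv_of_isOpen hD (by norm_num)).clm_apply contDiffOn_const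

lemma diffAt_fd (hD : IsOpen D) (hf : ContDiffOn ℝ 2 f D) (v : ℝ × ℝ) (hp : p ∈ D) :
    DifferentiableAt ℝ (fun q => fderiv ℝ f q v) p :=
  ((cd_fd hD hf v).differentiableOn (by norm_num)).differentiableAt (hD.mem_nhds hp)

lemma fd_sub (hf : DifferentiableAt ℝ f p) (hg : DifferentiableAt ℝ g p) (v : ℝ × ℝ) :
    fderiv ℝ (fun q => f q - g q) p v = fderiv ℝ f p v - fderiv ℝ g p v := by
  rw [fderiv_fun_sub hf hg]; rfl

lemma fd2_sub (hD : IsOpen D) (hf : ContDiffOn ℝ 2 f D) (hg : ContDiffOn ℝ 2 g D)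
    (hp : p ∈ D) (v w : ℝ × ℝ) :
    fderiv ℝ (fun q => fderiv ℝ (fun r => f r - g r) q v) p w
      = fderiv ℝ (fun q => fderiv ℝ f q v) p w - fderiv ℝ (fun q => fderiv ℝ g q v) p w := by
  have hev : (fun q => fderiv ℝ (fun r => f r - g r) q v)
      =ᶠ[nhds p] (fun q => fderiv ℝ f q v - fderiv ℝ g q v) := by
    filter_upwards [hD.mem_nhds hp] with q hq
    exact fd_sub (diffAt_of_cd hD hf hq) (diffAt_of_cd hD hg hq) v
  rw [hev.fderiv_eq, fderiv_fun_sub (diffAt_fd hD hf v hp) (diffAt_fd hD hg v hp)]; rfl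

lemma clm_ext_R2 {L L' : ℝ × ℝ →L[ℝ] ℝ} (h1 : L (1,0) = L' (1,0)) (h2 : L (0,1) = L' (0,1)) :
    L = L' := by
  apply ContinuousLinearMap.ext
  rintro ⟨a, b⟩
  have hab : ((a,b) : ℝ × ℝ) = a • ((1:ℝ),(0:ℝ)) + b • ((0:ℝ),(1:ℝ)) := by
    simp [Prod.ext_iff]
  rw [hab, map_add, map_add, map_smul, map_smul, map_smul, map_smul, h1, h2]

lemma no_localmax_of_second_pos {f : ℝ → ℝ} {c : ℝ} (hc : 0 < c)
    (hev : ∀ᶠ t in nhds (0:ℝ), DifferentiableAt ℝ f t)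
    (h1 : deriv f 0 = 0) (h2 : HasDerivAt (deriv f) c 0)
    (hmax : IsLocalMax f 0) : False := by
  have hslope : Tendsto (slope (deriv f) 0) (nhdsWithin 0 {(0:ℝ)}ᶜ) (nhds c) :=
    hasDerivAt_iff_tendsto_slope.1 h2
  have hpos : ∀ᶠ t in nhdsWithin (0:ℝ) (Ioi 0), 0 < deriv f t := by
    have hsub : Ioi (0:ℝ) ⊆ {(0:ℝ)}ᶜ := fun x hx => ne_of_gt hx
    have h' : ∀ᶠ t in nhdsWithin (0:ℝ) (Ioi 0), 0 < slope (deriv f) 0 t :=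
      (hslope.mono_left (nhdsWithin_mono 0 hsub)).eventually (eventually_gt_nhds hc)
    filter_upwards [h', self_mem_nhdsWithin] with t ht ht0
    have hs : slope (deriv f) 0 t = deriv f t / t := by
      simp [slope_def_field, h1]
    rw [hs] at ht
    have := mul_pos ht (show (0:ℝ) < t from ht0)
    calc (0:ℝ) < deriv f t / t * t := this
      _ = deriv f t := div_mul_cancel₀ _ (ne_of_gt ht0)
  have hall : ∀ᶠ t in nhdsWithin (0:ℝ) (Ioi 0),
      0 < deriv f t ∧ DifferentiableAt ℝ f t ∧ f t ≤ f 0 := by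
    filter_upwards [hpos, (hev.and hmax).filter_mono nhdsWithin_le_nhds] with t h1 h2
    exact ⟨h1, h2.1, h2.2⟩
  obtain ⟨δ, hδ, hIoc⟩ := mem_nhdsGT_iff_exists_Ioc_subset.1 hall
  have hδ0 : (0:ℝ) < δ := hδ
  have hmono : StrictMonoOn f (Icc 0 δ) := by
    apply strictMonoOn_of_deriv_pos (convex_Icc 0 δ)
    · intro t ht
      have hdt : DifferentiableAt ℝ f t := by
        rcases eq_or_lt_of_le ht.1 with h | h
        · rw [← h]; exact hev.self_of_nhds
        · exact (hIoc ⟨h, ht.2⟩).2.1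
      exact hdt.continuousAt.continuousWithinAt
    · intro t ht
      rw [interior_Icc] at ht
      exact (hIoc ⟨ht.1, le_of_lt ht.2⟩).1
  have h01 : f 0 < f δ := hmono ⟨le_refl 0, le_of_lt hδ0⟩ ⟨le_of_lt hδ0, le_refl δ⟩ hδ0
  have := (hIoc ⟨hδ0, le_refl δ⟩).2.2
  linarith

lemma second_deriv_nonpos {w : ℝ × ℝ → ℝ} {U : Set (ℝ × ℝ)} (hU : IsOpen U) {x : ℝ × ℝ}
    (hx : x ∈ U) (hw : ContDiffOn ℝ 2 w U) (hmax : IsLocalMax w x) (v : ℝ × ℝ) :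
    fderiv ℝ (fun q => fderiv ℝ w q v) x v ≤ 0 := by
  by_contra hpos
  push_neg at hpos
  set l : ℝ → ℝ × ℝ := fun t => x + t • v with hl
  have hl0 : l 0 = x := by simp [hl]
  have hlc : Continuous l := continuous_const.add (continuous_id.smul continuous_const)
  have hlder : ∀ t : ℝ, HasDerivAt l v t := fun t => by
    simpa [hl] using ((hasDerivAt_id t).smul_const v).const_add x
  have hU' : IsOpen (l ⁻¹' U) := hU.preimage hlc
  have h0U : (0:ℝ) ∈ l ⁻¹' U := by simp [Set.mem_preimage, hl0, hx]
  set f : ℝ → ℝ := fun s => w (l s) with hf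
  have hderiv : ∀ t ∈ l ⁻¹' U, HasDerivAt f (fderiv ℝ w (l t) v) t := fun t ht =>
    ((diffAt_of_cd hU hw ht).hasFDerivAt).comp_hasDerivAt t (hlder t)
  have hfd : ∀ᶠ t in nhds (0:ℝ), DifferentiableAt ℝ f t := by
    filter_upwards [hU'.mem_nhds h0U] with t ht
    exact (hderiv t ht).differentiableAt
  have hderiv_ev : deriv f =ᶠ[nhds (0:ℝ)] fun t => fderiv ℝ w (l t) v := by
    filter_upwards [hU'.mem_nhds h0U] with t ht
    exact (hderiv t ht).deriv
  have h10 : deriv f 0 = 0 := by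
    rw [(hderiv 0 h0U).deriv, hl0, hmax.fderiv_eq_zero]
    rfl
  have hg2 : HasDerivAt (fun t => fderiv ℝ w (l t) v)
      (fderiv ℝ (fun q => fderiv ℝ w q v) x v) 0 := by
    have hdg := (diffAt_fd hU hw v hx).hasFDerivAt
    rw [← hl0] at hdg
    have := hdg.comp_hasDerivAt 0 (hlder 0)
    rwa [hl0] at this
  have h2 : HasDerivAt (deriv f) (fderiv ℝ (fun q => fderiv ℝ w q v) x v) 0 :=
    hg2.congr_of_eventuallyEq hderiv_ev
  have hmaxf : IsLocalMax f 0 := by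
    have hm : IsLocalMax w (l 0) := by rwa [hl0]
    exact hm.comp_continuous hlc.continuousAt
  exact no_localmax_of_second_pos hpos hfd h10 h2 hmaxf

lemma max_principle {D : Set (ℝ × ℝ)} (hDhalf : D ⊆ {p : ℝ × ℝ | 0 < p.1}) (hDo : IsOpen D)
    (hDb : Bornology.IsBounded D) {u : ℝ × ℝ → ℝ} (hc : ContinuousOn u (closure D))
    (h2 : ContDiffOn ℝ 2 u D)
    (hlap : ∀ p ∈ D, fderiv ℝ (fun q => fderiv ℝ u q ((1:ℝ),(0:ℝ))) p (1,0)
      + fderiv ℝ u p (1,0) / p.1 + fderiv ℝ (fun q => fderiv ℝ u q ((0:ℝ),(1:ℝ))) p (0,1) = 0)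
    (hb : ∀ p ∈ frontier D, u p ≤ 0) : ∀ p ∈ D, u p ≤ 0 := by
  obtain ⟨R, hR⟩ := hDb.closure.subset_closedBall 0
  set M := Real.exp R with hM
  have hMpos : 0 < M := Real.exp_pos R
  set E : ℝ × ℝ → ℝ := fun q => Real.exp q.1 with hE
  have hEder : ∀ q : ℝ × ℝ, HasFDerivAt E (Real.exp q.1 • ContinuousLinearMap.fst ℝ ℝ ℝ) q :=
    fun q => (Real.hasDerivAt_exp q.1).comp_hasFDerivAt q hasFDerivAt_fst
  have hEρ : ∀ q, fderiv ℝ E q ((1:ℝ),(0:ℝ)) = E q := fun q => by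
    rw [(hEder q).fderiv]; simp [hE]
  have hEz : ∀ q, fderiv ℝ E q ((0:ℝ),(1:ℝ)) = 0 := fun q => by
    rw [(hEder q).fderiv]; simp
  have hEcd : ContDiff ℝ 2 E := Real.contDiff_exp.comp contDiff_fst
  have hEpos : ∀ q : ℝ × ℝ, 0 < E q := fun q => Real.exp_pos q.1
  have hEleM : ∀ q ∈ closure D, E q ≤ M := by
    intro q hq
    have h1 : ‖q‖ ≤ R := by simpa [Metric.mem_closedBall, dist_eq_norm] using hR hq
    have h2 : q.1 ≤ R := le_trans (le_trans (le_abs_self _) (norm_fst_le q)) h1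
    exact Real.exp_le_exp.2 h2
  intro p hp
  have key : ∀ ε : ℝ, 0 < ε → u p ≤ ε * M := by
    intro ε hε
    set w : ℝ × ℝ → ℝ := fun q => u q + ε * E q with hw
    have hwc : ContinuousOn w (closure D) :=
      hc.add (Continuous.continuousOn (by continuity))
    have hK : IsCompact (closure D) := hDb.isCompact_closure
    have hKne : (closure D).Nonempty := ⟨p, subset_closure hp⟩
    obtain ⟨x, hxK, hxmax⟩ := hK.exists_isMaxOn hKne hwc
    have hwx : w x ≤ ε * M := by
      by_cases hxD : x ∈ D
      · exfalso
        have hloc : IsLocalMax w x :=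
          hxmax.isLocalMax (Filter.mem_of_superset (hDo.mem_nhds hxD) subset_closure)
        have h2w : ContDiffOn ℝ 2 w D := h2.add ((contDiff_const.mul hEcd).contDiffOn)
        have hf0 : fderiv ℝ w x = 0 := hloc.fderiv_eq_zero
        have hEdiff : ∀ q : ℝ × ℝ, DifferentiableAt ℝ (fun r => ε * E r) q :=
          fun q => ((hEder q).differentiableAt).const_mul ε
        have hwv : ∀ q ∈ D, ∀ v : ℝ × ℝ,
            fderiv ℝ w q v = fderiv ℝ u q v + ε * fderiv ℝ E q v := by
          intro q hq v
          rw [hw]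
          rw [fderiv_fun_add (diffAt_of_cd hDo h2 hq) (hEdiff q)]
          rw [ContinuousLinearMap.add_apply, fderiv_const_mul (hEder q).differentiableAt]
          rfl
        have hwρ0 : fderiv ℝ u x ((1:ℝ),(0:ℝ)) = -(ε * E x) := by
          have := hwv x hxD (1,0)
          rw [hf0] at this
          simp only [ContinuousLinearMap.zero_apply] at this
          rw [hEρ] at this
          linarith
        have hevρ : (fun q => fderiv ℝ w q ((1:ℝ),(0:ℝ)))
            =ᶠ[nhds x] (fun q => fderiv ℝ u q ((1:ℝ),(0:ℝ)) + ε * E q) := by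
          filter_upwards [hDo.mem_nhds hxD] with q hq
          rw [hwv q hq (1,0), hEρ]
        have hevz : (fun q => fderiv ℝ w q ((0:ℝ),(1:ℝ)))
            =ᶠ[nhds x] (fun q => fderiv ℝ u q ((0:ℝ),(1:ℝ))) := by
          filter_upwards [hDo.mem_nhds hxD] with q hq
          rw [hwv q hq (0,1), hEz, mul_zero, add_zero]
        have hsecρ : fderiv ℝ (fun q => fderiv ℝ w q ((1:ℝ),(0:ℝ))) x (1,0)
            = fderiv ℝ (fun q => fderiv ℝ u q ((1:ℝ),(0:ℝ))) x (1,0) + ε * E x := by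
          rw [hevρ.fderiv_eq, fderiv_fun_add (diffAt_fd hDo h2 (1,0) hxD) (hEdiff x)]
          rw [ContinuousLinearMap.add_apply, fderiv_const_mul (hEder x).differentiableAt]
          have : fderiv ℝ E x ((1:ℝ),(0:ℝ)) = E x := hEρ x
          simp [this]
        have hsecz : fderiv ℝ (fun q => fderiv ℝ w q ((0:ℝ),(1:ℝ))) x (0,1)
            = fderiv ℝ (fun q => fderiv ℝ u q ((0:ℝ),(1:ℝ))) x (0,1) := by
          rw [hevz.fderiv_eq]
        have hs1 := second_deriv_nonpos hDo hxD h2w hloc (1,0)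
        have hs2 := second_deriv_nonpos hDo hxD h2w hloc (0,1)
        rw [hsecρ] at hs1
        rw [hsecz] at hs2
        have hlx := hlap x hxD
        have hx1 : 0 < x.1 := hDhalf hxD
        have hEx : 0 < E x := hEpos x
        have hdiv : -(ε * E x) / x.1 < 0 := by
          apply div_neg_of_neg_of_pos _ hx1
          nlinarith
        rw [hwρ0] at hlx
        nlinarith
      · have hfr : x ∈ frontier D := by
          rw [frontier, hDo.interior_eq]
          exact ⟨hxK, hxD⟩
        have hux : u x ≤ 0 := hb x hfr
        have hExM : E x ≤ M := hEleM x hxK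
        show u x + ε * E x ≤ ε * M
        nlinarith
    have hwp : w p ≤ w x := hxmax (subset_closure hp)
    have : u p ≤ w p - ε * E p := by rw [hw]; simp
    have hEp : 0 < E p := hEpos p
    nlinarith
  by_contra hup
  push_neg at hup
  have h1 := key (u p / (2 * M)) (by positivity)
  have h2' : u p / (2 * M) * M = u p / 2 := by field_simp
  rw [h2'] at h1
  linarith

end Aux

theorem uniqueness_weyl_system
    (D : Set (ℝ × ℝ)) (hDhalf : D ⊆ {p : ℝ × ℝ | 0 < p.1})
    (hDo : IsOpen D) (hDb : Bornology.IsBounded D) (hDconn : IsConnected D)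
    (g h : ℝ × ℝ → ℝ) (p₀ : ℝ × ℝ) (hp₀ : p₀ ∈ D)
    (ψ₁ γ₁ ψ₂ γ₂ : ℝ × ℝ → ℝ)
    (hcψ₁ : ContinuousOn ψ₁ (closure D)) (hcγ₁ : ContinuousOn γ₁ (closure D))
    (hcψ₂ : ContinuousOn ψ₂ (closure D)) (hcγ₂ : ContinuousOn γ₂ (closure D))
    (h2ψ₁ : ContDiffOn ℝ 2 ψ₁ D) (h2γ₁ : ContDiffOn ℝ 2 γ₁ D)
    (h2ψ₂ : ContDiffOn ℝ 2 ψ₂ D) (h2γ₂ : ContDiffOn ℝ 2 γ₂ D)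
    (hsys₁ : ∀ p ∈ D, WeylSystem ψ₁ γ₁ g h p)
    (hsys₂ : ∀ p ∈ D, WeylSystem ψ₂ γ₂ g h p)
    (hbdry : ∀ p ∈ frontier D, ψ₁ p = ψ₂ p)
    (hpoint : γ₁ p₀ = γ₂ p₀) :
    (∀ p ∈ D, ψ₁ p = ψ₂ p) ∧ (∀ p ∈ D, γ₁ p = γ₂ p) := by
  -- each ψ satisfies the cylindrical Laplace equation
  have lap : ∀ (ψ γ' : ℝ × ℝ → ℝ), (∀ p ∈ D, WeylSystem ψ γ' g h p) → ∀ p ∈ D,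
      fderiv ℝ (fun q => fderiv ℝ ψ q ((1:ℝ),(0:ℝ))) p (1,0)
      + fderiv ℝ ψ p (1,0) / p.1
      + fderiv ℝ (fun q => fderiv ℝ ψ q ((0:ℝ),(1:ℝ))) p (0,1) = 0 := by
    intro ψ γ' hsys p hp
    obtain ⟨e1, _, _, e4⟩ := hsys p hp
    simp only [dρ_def, dz_def] at e1 e4
    linarith
  have lap1 := lap ψ₁ γ₁ hsys₁
  have lap2 := lap ψ₂ γ₂ hsys₂
  -- Laplace equation for differences
  have lapdiff : ∀ (f' g' : ℝ × ℝ → ℝ), ContDiffOn ℝ 2 f' D → ContDiffOn ℝ 2 g' D →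
      (∀ p ∈ D, fderiv ℝ (fun q => fderiv ℝ f' q ((1:ℝ),(0:ℝ))) p (1,0)
        + fderiv ℝ f' p (1,0) / p.1
        + fderiv ℝ (fun q => fderiv ℝ f' q ((0:ℝ),(1:ℝ))) p (0,1) = 0) →
      (∀ p ∈ D, fderiv ℝ (fun q => fderiv ℝ g' q ((1:ℝ),(0:ℝ))) p (1,0)
        + fderiv ℝ g' p (1,0) / p.1
        + fderiv ℝ (fun q => fderiv ℝ g' q ((0:ℝ),(1:ℝ))) p (0,1) = 0) →
      ∀ p ∈ D, fderiv ℝ (fun q => fderiv ℝ (fun r => f' r - g' r) q ((1:ℝ),(0:ℝ))) p (1,0)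
        + fderiv ℝ (fun r => f' r - g' r) p (1,0) / p.1
        + fderiv ℝ (fun q => fderiv ℝ (fun r => f' r - g' r) q ((0:ℝ),(1:ℝ))) p (0,1) = 0 := by
    intro f' g' hf hg l1 l2 p hp
    rw [fd2_sub hDo hf hg hp (1,0) (1,0), fd2_sub hDo hf hg hp (0,1) (0,1),
      fd_sub (diffAt_of_cd hDo hf hp) (diffAt_of_cd hDo hg hp) (1,0), sub_div]
    have := l1 p hp
    have := l2 p hp
    linarith
  have hle1 : ∀ p ∈ D, ψ₁ p - ψ₂ p ≤ 0 := by
    have := max_principle hDhalf hDo hDb (hcψ₁.sub hcψ₂) (h2ψ₁.sub h2ψ₂)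
      (lapdiff ψ₁ ψ₂ h2ψ₁ h2ψ₂ lap1 lap2)
      (fun p hp => by simp [hbdry p hp])
    exact fun p hp => this p hp
  have hle2 : ∀ p ∈ D, ψ₂ p - ψ₁ p ≤ 0 := by
    have := max_principle hDhalf hDo hDb (hcψ₂.sub hcψ₁) (h2ψ₂.sub h2ψ₁)
      (lapdiff ψ₂ ψ₁ h2ψ₂ h2ψ₁ lap2 lap1)
      (fun p hp => by simp [hbdry p hp])
    exact fun p hp => this p hp
  have hψ : ∀ p ∈ D, ψ₁ p = ψ₂ p := fun p hp =>
    le_antisymm (by linarith [hle1 p hp]) (by linarith [hle2 p hp])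
  refine ⟨hψ, ?_⟩
  -- γ part
  have hψfd : ∀ p ∈ D, fderiv ℝ ψ₁ p = fderiv ℝ ψ₂ p := fun p hp =>
    Filter.EventuallyEq.fderiv_eq (by
      filter_upwards [hDo.mem_nhds hp] with q hq
      exact hψ q hq)
  have hγd : ∀ p ∈ D, fderiv ℝ (fun q => γ₁ q - γ₂ q) p = 0 := by
    intro p hp
    have hne : p.1 ≠ 0 := ne_of_gt (hDhalf hp)
    obtain ⟨_, e2₁, e3₁, _⟩ := hsys₁ p hp
    obtain ⟨_, e2₂, e3₂, _⟩ := hsys₂ p hp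
    simp only [dρ_def, dz_def] at e2₁ e3₁ e2₂ e3₂
    rw [hψfd p hp] at e2₁ e3₁
    have hρ : fderiv ℝ γ₁ p ((1:ℝ),(0:ℝ)) = fderiv ℝ γ₂ p (1,0) := by
      have hq : fderiv ℝ γ₁ p ((1:ℝ),(0:ℝ)) / p.1 = fderiv ℝ γ₂ p (1,0) / p.1 := by linarith
      field_simp at hq
      exact hq
    have hz' : fderiv ℝ γ₁ p ((0:ℝ),(1:ℝ)) = fderiv ℝ γ₂ p (0,1) := by
      have hq : fderiv ℝ γ₁ p ((0:ℝ),(1:ℝ)) / p.1 = fderiv ℝ γ₂ p (0,1) / p.1 := by linarith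
      field_simp at hq
      exact hq
    rw [fderiv_fun_sub (diffAt_of_cd hDo h2γ₁ hp) (diffAt_of_cd hDo h2γ₂ hp), sub_eq_zero]
    exact clm_ext_R2 hρ hz'
  have hγeq : ∀ p ∈ D, γ₁ p - γ₂ p = γ₁ p₀ - γ₂ p₀ := by
    set v : ℝ × ℝ → ℝ := fun q => γ₁ q - γ₂ q with hv
    haveI : PreconnectedSpace D := Subtype.preconnectedSpace hDconn.isPreconnected
    have hvd : DifferentiableOn ℝ v D := (h2γ₁.sub h2γ₂).differentiableOn (by norm_num)
    have hlc : IsLocallyConstant (fun q : D => v q) := by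
      rw [IsLocallyConstant.iff_eventually_eq]
      intro q
      obtain ⟨r, hr, hball⟩ := Metric.isOpen_iff.1 hDo q q.2
      have hconstball : ∀ y ∈ ball (q:ℝ×ℝ) r, v y = v q := fun y hy =>
        (convex_ball _ _).is_const_of_fderivWithin_eq_zero (hvd.mono hball)
          (fun z hz => by rw [fderivWithin_of_isOpen isOpen_ball hz]; exact hγd z (hball hz))
          hy (mem_ball_self hr)
      have hev2 : ∀ᶠ y in nhds (q : ℝ × ℝ), v y = v q := by
        filter_upwards [ball_mem_nhds _ hr] with y hy using hconstball y hy
      exact (continuous_subtype_val.continuousAt).eventually hev2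
    intro p hp
    exact hlc.apply_eq_of_preconnectedSpace ⟨p, hp⟩ ⟨p₀, hp₀⟩
  intro p hp
  have := hγeq p hp
  rw [hpoint] at this
  linarith
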